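/- Every 3-leaf power graph is chordal and distance hereditary. -/

import Mathlib

open SimpleGraph

/-- A vertex of a tree is a leaf if it has exactly one neighbour. -/
def IsLeaf {V : Type} (T : SimpleGraph V) (v : V) : Prop := ∃! w, T.Adj v w

/-- A graph is distance hereditary if every connected induced subgraph preserves the
distances of the original graph. -/
def IsDistHereditary {V : Type} (G : SimpleGraph V) : Prop :=
  ∀ s : Set V, (SimpleGraph.induce s G).Connected →
    ∀ x y : s, (SimpleGraph.induce s G).dist x y = G.dist ↑x ↑y

/-- A graph is a 3-leaf power: there is a tree whose leaf set is the vertex set of the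
graph, two vertices being adjacent iff the distance between the corresponding leaves is
at most 3. -/
def IsThreeLeafPower {α : Type} (G : SimpleGraph α) : Prop :=
  ∃ (W : Type) (_ : Fintype W) (T' : SimpleGraph W), T'.IsTree ∧
    ∃ f : α → W, Function.Injective f ∧ (∀ a : α, IsLeaf T' (f a)) ∧
      (∀ w : W, IsLeaf T' w → ∃ a : α, f a = w) ∧
      ∀ x y : α, G.Adj x y ↔ (x ≠ y ∧ T'.dist (f x) (f y) ≤ 3)

section Aux
variable {V W : Type} {G : SimpleGraph V} {T : SimpleGraph W}

lemma aux_key (hT : T.IsTree) (f g : V → W)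
    (hg1 : ∀ a, T.Adj (f a) (g a)) (hg2 : ∀ a w, T.Adj (f a) w → w = g a)
    (hfinj : Function.Injective f)
    (hadj : ∀ x y, G.Adj x y ↔ (x ≠ y ∧ T.dist (f x) (f y) ≤ 3)) :
    ∀ x y, G.Adj x y ↔ (x ≠ y ∧ (g x = g y ∨ T.Adj (g x) (g y))) := by
  have hTconn := hT.isConnected
  intro x y
  rw [hadj]
  constructor
  · rintro ⟨hxy, hd⟩
    refine ⟨hxy, ?_⟩
    have hne : f x ≠ f y := fun e => hxy (hfinj e)
    obtain ⟨p, hp⟩ := hTconn.exists_walk_length_eq_dist (f x) (f y)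
    rw [← hp] at hd
    clear hp
    have main : ∀ (u v : W) (p : T.Walk u v), u = f x → v = f y → p.length ≤ 3 →
        (g x = g y ∨ T.Adj (g x) (g y)) := by
      intro u v p hu
      subst hu
      cases p with
      | nil => intro hv _; exact absurd hv hne
      | @cons _ b _ h1 q =>
        cases q with
        | nil =>
          intro hv _
          subst hv
          right
          have e1 : f y = g x := hg2 x _ h1
          have e2 : f x = g y := hg2 y _ h1.symm
          rw [← e1, ← e2]
          exact h1.symm
        | @cons _ c _ h2 q' =>
          cases q' with
          | nil =>
            intro hv _
            subst hv
            left
            have e1 : b = g x := hg2 x _ h1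
            have e2 : b = g y := hg2 y _ h2.symm
            rw [← e1, ← e2]
          | @cons _ dd _ h3 q'' =>
            cases q'' with
            | nil =>
              intro hv _
              subst hv
              right
              have e1 : b = g x := hg2 x _ h1
              have e2 : c = g y := hg2 y _ h3.symm
              rw [← e1, ← e2]
              exact h2
            | cons h4 q''' =>
              intro _ hlen
              exfalso
              simp [Walk.length_cons] at hlen
              omega
    exact main _ _ p rfl rfl hd
  · rintro ⟨hxy, hcase⟩
    refine ⟨hxy, ?_⟩
    rcases hcase with he | ha
    · calc T.dist (f x) (f y)
          ≤ (Walk.cons (hg1 x) (Walk.cons (by rw [he]; exact (hg1 y).symm) Walk.nil)).length :=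
            dist_le _
        _ ≤ 3 := by simp [Walk.length_cons]
    · calc T.dist (f x) (f y)
          ≤ (Walk.cons (hg1 x) (Walk.cons ha (Walk.cons (hg1 y).symm Walk.nil))).length :=
            dist_le _
        _ ≤ 3 := by simp [Walk.length_cons]

lemma aux_chordal (hT : T.IsTree) (g : V → W)
    (keyADJ : ∀ x y, G.Adj x y ↔ (x ≠ y ∧ (g x = g y ∨ T.Adj (g x) (g y))))
    (n : ℕ) (hn : 4 ≤ n) (c : ZMod n → V) (hcinj : Function.Injective c)
    (hc : ∀ i j : ZMod n, G.Adj (c i) (c j) ↔ (j = i + 1 ∨ i = j + 1)) : False := by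
  haveI : NeZero n := ⟨by omega⟩
  set Hc : ZMod n → W := fun i => g (c i) with hHc
  have hvalinj : ∀ a b : ℕ, a < n → b < n → ((a : ZMod n) = (b : ZMod n)) → a = b := by
    intro a b ha hb hab
    have := congrArg ZMod.val hab
    rwa [ZMod.val_cast_of_lt ha, ZMod.val_cast_of_lt hb] at this
  have hsmallne : ∀ a b : ℕ, a < n → b < n → a ≠ b → (a : ZMod n) ≠ (b : ZMod n) :=
    fun a b ha hb hne he => hne (hvalinj a b ha hb he)
  have hnoncons : ∀ i j : ZMod n, i ≠ j → j ≠ i + 1 → i ≠ j + 1 →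
      Hc i ≠ Hc j ∧ ¬ T.Adj (Hc i) (Hc j) := by
    intro i j hij h1 h2
    have hnadj : ¬ G.Adj (c i) (c j) := by rw [hc]; push_neg; exact ⟨h1, h2⟩
    have hne : c i ≠ c j := fun e => hij (hcinj e)
    rw [keyADJ] at hnadj
    push_neg at hnadj
    exact hnadj hne
  have hcons : ∀ i : ZMod n, T.Adj (Hc i) (Hc (i + 1)) := by
    intro i
    have hA : G.Adj (c i) (c (i + 1)) := by rw [hc]; exact Or.inl rfl
    rw [keyADJ] at hA
    rcases hA.2 with he | ha
    · exfalso
      have e1 : i ≠ i + 2 := by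
        intro e
        have : (0 : ZMod n) = 2 := by
          have := add_left_cancel (a := i) (b := 0) (c := 2) (by rw [add_zero]; exact e)
          exact this
        have : ((0 : ℕ) : ZMod n) = ((2 : ℕ) : ZMod n) := by push_cast; exact this
        exact absurd (hvalinj 0 2 (by omega) (by omega) this) (by omega)
      have e2 : i + 2 ≠ i + 1 := by
        intro e
        have : (2 : ZMod n) = 1 := add_left_cancel e
        have : ((2 : ℕ) : ZMod n) = ((1 : ℕ) : ZMod n) := by push_cast; exact this
        exact absurd (hvalinj 2 1 (by omega) (by omega) this) (by omega)
      have e3 : i ≠ (i + 2) + 1 := by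
        intro e
        have : (0 : ZMod n) = 3 := by
          have h03 : i + 0 = i + 3 := by
            calc i + 0 = i := add_zero i
              _ = i + 2 + 1 := e
              _ = i + 3 := by ring
          exact add_left_cancel h03
        have : ((0 : ℕ) : ZMod n) = ((3 : ℕ) : ZMod n) := by push_cast; exact this
        exact absurd (hvalinj 0 3 (by omega) (by omega) this) (by omega)
      obtain ⟨hne2, hnadj2⟩ := hnoncons i (i + 2) e1 e2 e3
      have hA2 : G.Adj (c (i + 1)) (c (i + 1 + 1)) := by rw [hc]; exact Or.inl rfl
      rw [keyADJ] at hA2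
      have h12 : i + 1 + 1 = i + 2 := by ring
      rcases hA2.2 with he2 | ha2
      · apply hne2
        show g (c i) = g (c (i + 2))
        rw [he, ← h12]
        exact he2
      · apply hnadj2
        show T.Adj (g (c i)) (g (c (i + 2)))
        rw [he, ← h12]
        exact ha2
    · exact ha
  have hHinj : Function.Injective Hc := by
    intro i j he
    by_contra hij
    by_cases h1 : j = i + 1
    · subst h1; exact (hcons i).ne he
    by_cases h2 : i = j + 1
    · subst h2; exact (hcons j).ne he.symm
    · exact (hnoncons i j hij h1 h2).1 he
  -- natural-number indexed version
  set h' : ℕ → W := fun k => Hc ((k : ℕ) : ZMod n) with hh'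
  have hadj' : ∀ k : ℕ, T.Adj (h' k) (h' (k + 1)) := by
    intro k
    have := hcons ((k : ℕ) : ZMod n)
    simpa [hh', Nat.cast_add, Nat.cast_one] using this
  have hinj' : ∀ a b : ℕ, a < n → b < n → h' a = h' b → a = b := by
    intro a b ha hb e
    exact hvalinj a b ha hb (hHinj e)
  -- build long path from h' 1 to h' (1 + (n-2))
  have hCon : ∀ k : ℕ, ∃ p : T.Walk (h' 1) (h' (1 + k)),
      p.support = (List.range (k + 1)).map (fun i => h' (1 + i)) := by
    intro k
    induction k with
    | zero => exact ⟨Walk.nil, by simp [List.range_succ]⟩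
    | succ k ih =>
      obtain ⟨p, hp⟩ := ih
      refine ⟨p.concat (hadj' (1 + k)), ?_⟩
      rw [Walk.support_concat, hp]
      conv_rhs => rw [List.range_succ]
      rw [List.map_append]
      rfl
  obtain ⟨p, hp⟩ := hCon (n - 2)
  have hEnd : h' (1 + (n - 2)) = h' (n - 1) := by
    congr 1
    omega
  have hn0 : h' (n - 1 + 1) = h' 0 := by
    have e : n - 1 + 1 = n := by omega
    rw [e]
    show Hc ((n : ℕ) : ZMod n) = Hc ((0 : ℕ) : ZMod n)
    rw [ZMod.natCast_self, Nat.cast_zero]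
  have e1 : T.Adj (h' 1) (h' 0) := (hadj' 0).symm
  have e2 : T.Adj (h' 0) (h' (n - 1)) := by
    have := (hadj' (n - 1)).symm
    rwa [hn0] at this
  set q : T.Walk (h' 1) (h' (1 + (n - 2))) :=
    (Walk.cons e1 (Walk.cons e2 Walk.nil)).copy rfl hEnd.symm with hq
  have hpPath : p.IsPath := by
    rw [Walk.isPath_def, hp]
    refine List.Nodup.map_on ?_ List.nodup_range
    intro a ha b hb e
    rw [List.mem_range] at ha hb
    have := hinj' (1 + a) (1 + b) (by omega) (by omega) e
    omega
  have ne10 : h' 1 ≠ h' 0 := fun e => absurd (hinj' 1 0 (by omega) (by omega) e) (by omega)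
  have ne1n : h' 1 ≠ h' (n - 1) :=
    fun e => absurd (hinj' 1 (n - 1) (by omega) (by omega) e) (by omega)
  have ne0n : h' 0 ≠ h' (n - 1) :=
    fun e => absurd (hinj' 0 (n - 1) (by omega) (by omega) e) (by omega)
  have hqPath : q.IsPath := by
    rw [hq, Walk.isPath_def, Walk.support_copy]
    simp [ne10, ne1n, ne0n]
  have h0notp : h' 0 ∉ p.support := by
    rw [hp]
    simp only [List.mem_map, List.mem_range]
    rintro ⟨i, hi, he⟩
    have := hinj' (1 + i) 0 (by omega) (by omega) he
    omega
  have hpq : p = q := by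
    have := hT.IsAcyclic.path_unique ⟨p, hpPath⟩ ⟨q, hqPath⟩
    exact congrArg Subtype.val this
  apply h0notp
  rw [hpq, hq, Walk.support_copy]
  simp

lemma aux_dh (hT : T.IsTree) (g : V → W)
    (keyADJ : ∀ x y, G.Adj x y ↔ (x ≠ y ∧ (g x = g y ∨ T.Adj (g x) (g y))))
    (s : Set V) (hsconn : (SimpleGraph.induce s G).Connected) (x y : s) :
    (SimpleGraph.induce s G).dist x y = G.dist ↑x ↑y := by
  classical
  have hTconn := hT.isConnected
  set Hs := SimpleGraph.induce s G with hHs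
  have hadjHG : ∀ a b : s, Hs.Adj a b ↔ G.Adj ↑a ↑b := fun a b => Iff.rfl
  -- push walks from the induced graph down to G
  have hHtoG : ∀ (a b : s) (q : Hs.Walk a b), ∃ p : G.Walk ↑a ↑b, p.length = q.length := by
    intro a b q
    induction q with
    | nil => exact ⟨Walk.nil, rfl⟩
    | cons h q ih =>
      obtain ⟨p, hp⟩ := ih
      exact ⟨Walk.cons ((hadjHG _ _).mp h) p, by simp [Walk.length_cons, hp]⟩
  -- project G-walks to T-walks between the supports
  have hGwalkToT : ∀ (a b : V) (q : G.Walk a b), ∃ M : T.Walk (g a) (g b),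
      M.length ≤ q.length := by
    intro a b q
    induction q with
    | nil => exact ⟨Walk.nil, le_rfl⟩
    | cons h q ih =>
      obtain ⟨M, hM⟩ := ih
      rcases ((keyADJ _ _).mp h).2 with he | ha
      · exact ⟨M.copy he.symm rfl, by rw [Walk.length_copy]; simp [Walk.length_cons]; omega⟩
      · exact ⟨Walk.cons ha M, by simp [Walk.length_cons]; omega⟩
  -- project induced walks to T-walks, remembering witnesses on the support
  have hHwalkToT : ∀ (a b : s) (q : Hs.Walk a b), ∃ M : T.Walk (g ↑a) (g ↑b),
      (∀ w ∈ M.support, ∃ u : s, g ↑u = w) := by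
    intro a b q
    induction q with
    | @nil a0 => exact ⟨Walk.nil, by intro w hw; rw [Walk.support_nil, List.mem_singleton] at hw
                                     exact ⟨a0, hw.symm⟩⟩
    | @cons a u b h q ih =>
      obtain ⟨M, hM⟩ := ih
      rcases ((keyADJ _ _).mp ((hadjHG _ _).mp h)).2 with he | ha
      · refine ⟨M.copy he.symm rfl, ?_⟩
        intro w hw
        rw [Walk.support_copy] at hw
        exact hM w hw
      · refine ⟨Walk.cons ha M, ?_⟩
        intro w hw
        rw [Walk.support_cons, List.mem_cons] at hw
        rcases hw with hw | hw
        · exact ⟨a, hw.symm⟩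
        · exact hM w hw
  -- main upper bound by induction on the tree distance
  have hB2 : ∀ d : ℕ, ∀ a b : s, Hs.Walk a b → g ↑a ≠ g ↑b →
      T.dist (g ↑a) (g ↑b) = d + 1 → Hs.dist a b ≤ d + 1 := by
    intro d
    induction d with
    | zero =>
      intro a b q hne hd
      have hadjT : T.Adj (g ↑a) (g ↑b) := dist_eq_one_iff_adj.mp hd
      have hG : G.Adj ↑a ↑b := (keyADJ _ _).mpr
        ⟨fun e => hne (by rw [e]), Or.inr hadjT⟩
      have := dist_le (Walk.cons ((hadjHG a b).mpr hG) Walk.nil)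
      simpa using this
    | succ d ih =>
      intro a b q hne hd
      obtain ⟨P, hPpath, hPlen⟩ := (hTconn (g ↑a) (g ↑b)).exists_path_of_dist
      rw [hd] at hPlen
      suffices hgen : ∀ (u : W) (P : T.Walk u (g ↑b)), P.IsPath → P.length = d + 1 + 1 →
          u = g ↑a → Hs.dist a b ≤ d + 1 + 1 by
        exact hgen _ P hPpath hPlen rfl
      clear hPpath hPlen P
      intro u P hPpath hPlen hu
      cases P with
      | nil => simp [Walk.length_nil] at hPlen
      | @cons _ w _ hac P' =>
        subst hu
        rw [Walk.length_cons] at hPlen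
        have hdw : T.dist w (g ↑b) = d + 1 := by
          have h1 : T.dist w (g ↑b) ≤ d + 1 := by
            have := dist_le P'
            omega
          have h3 : T.dist (g ↑a) w ≤ 1 := by
            have := dist_le (Walk.cons hac Walk.nil)
            simpa using this
          have h2 := hTconn.dist_triangle (u := g ↑a) (v := w) (w := g ↑b)
          omega
        have hwb : w ≠ g ↑b := by
          intro e
          rw [e, dist_self] at hdw
          omega
        obtain ⟨M, hMsup⟩ := hHwalkToT a b q
        have hwM : w ∈ M.support := by
          have hMb : M.bypass.IsPath := Walk.bypass_isPath M
          have hpq := hT.IsAcyclic.path_unique ⟨Walk.cons hac P', hPpath⟩ ⟨M.bypass, hMb⟩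
          have heq : Walk.cons hac P' = M.bypass := congrArg Subtype.val hpq
          have hwmem : w ∈ (Walk.cons hac P').support := by
            rw [Walk.support_cons]
            exact List.mem_cons_of_mem _ P'.start_mem_support
          rw [heq] at hwmem
          exact Walk.support_bypass_subset M hwmem
        obtain ⟨v, hv⟩ := hMsup w hwM
        have hAav : G.Adj ↑a ↑v := (keyADJ _ _).mpr
          ⟨fun e => hac.ne (by rw [e, hv]), Or.inr (by rw [hv]; exact hac)⟩
        have hHav : Hs.Adj a v := (hadjHG a v).mpr hAav
        have hgvb : g ↑v ≠ g ↑b := by rw [hv]; exact hwb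
        have hrec := ih v b (Walk.cons hHav.symm q) hgvb (by rw [hv]; exact hdw)
        have htri := hsconn.dist_triangle (u := a) (v := v) (w := b)
        have hav1 : Hs.dist a v ≤ 1 := by
          have := dist_le (Walk.cons hHav Walk.nil)
          simpa using this
        omega
  -- now the main argument
  by_cases hxy : x = y
  · subst hxy
    simp [SimpleGraph.dist_self]
  · have hxyV : (↑x : V) ≠ ↑y := fun e => hxy (Subtype.ext e)
    obtain ⟨q, hq⟩ := hsconn.exists_walk_length_eq_dist x y
    obtain ⟨p0, hp0⟩ := hHtoG x y q
    have hGle : G.dist ↑x ↑y ≤ Hs.dist x y := by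
      have := dist_le p0
      omega
    by_cases hg : g ↑x = g ↑y
    · have hA : G.Adj ↑x ↑y := (keyADJ _ _).mpr ⟨hxyV, Or.inl hg⟩
      have h1 : Hs.dist x y = 1 := dist_eq_one_iff_adj.mpr ((hadjHG x y).mpr hA)
      have h2 : G.dist ↑x ↑y = 1 := dist_eq_one_iff_adj.mpr hA
      rw [h1, h2]
    · have hdpos : T.dist (g ↑x) (g ↑y) ≠ 0 := by
        intro e
        exact hg (hTconn.dist_eq_zero_iff.mp e)
      obtain ⟨d', hd'⟩ : ∃ d', T.dist (g ↑x) (g ↑y) = d' + 1 :=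
        ⟨T.dist (g ↑x) (g ↑y) - 1, by omega⟩
      have hHle : Hs.dist x y ≤ d' + 1 := hB2 d' x y q hg hd'
      have hGreach : G.Reachable ↑x ↑y := ⟨p0⟩
      obtain ⟨pG, hpG⟩ := hGreach.exists_walk_length_eq_dist
      obtain ⟨M, hMle⟩ := hGwalkToT ↑x ↑y pG
      have hTle : d' + 1 ≤ G.dist ↑x ↑y := by
        have := dist_le M
        omega
      omega

end Aux

/-- every 3-leaf power is chordal (no induced cycle of length ≥ 4) and
distance hereditary. -/

theorem stmt19 (V : Type) [Fintype V] (G : SimpleGraph V)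
    (h : IsThreeLeafPower G) :
    (∀ n : ℕ, 4 ≤ n → ¬ ∃ f : ZMod n → V, Function.Injective f ∧
        ∀ i j : ZMod n, G.Adj (f i) (f j) ↔ (j = i + 1 ∨ i = j + 1)) ∧
    IsDistHereditary G := by
  obtain ⟨W, _, T, hT, f, hfinj, hleaf, hsurj, hadj⟩ := h
  choose g hg1 hg2 using hleaf
  have keyADJ := aux_key hT f g hg1 hg2 hfinj hadj
  constructor
  · intro n hn hex
    obtain ⟨c, hcinj, hc⟩ := hex
    exact aux_chordal hT g keyADJ n hn c hcinj hc
  · intro s hsconn x y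
    exact aux_dh hT g keyADJ s hsconn x y
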